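/- In the Fermi normal coordinates (η, w', x) with x ∈ ℝ^r on the collar of a totally geodesic hyperbolic m-manifold M inside a hyperbolic n-manifold N (r = n - m), the Riemannian volume element of N factors as (η^{-m} dη d^{m-1}w') · ((1+|x|²)^{(m-1)/2} d^r x), where the first factor is the hyperbolic volume element of M. -/

import Mathlib

open MeasureTheory ENNReal

/-- Coordinates: first slot is `y` (resp. `η`), second is `w' ∈ ℝ^{m-1}` (`k = m-1`),
third is `w'' ∈ ℝ^r` (resp. the Fermi transverse variable `x ∈ ℝ^r`). -/
abbrev Coords (k r : ℕ) := ℝ × (Fin k → ℝ) × (Fin r → ℝ)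

/-- The inverse Fermi coordinate map `(η, w', x) ↦ (y, w', w'')` with
`y = η/√(1+|x|²)` and `w'' = η x/√(1+|x|²)` (so that `η = √(y²+|w''|²)`, `x = w''/y`). -/
noncomputable def fermiMap {k r : ℕ} (q : Coords k r) : Coords k r :=
  (q.1 / Real.sqrt (1 + ∑ j, q.2.2 j ^ 2), q.2.1,
    fun j => q.1 * q.2.2 j / Real.sqrt (1 + ∑ j, q.2.2 j ^ 2))

lemma measurable_sqrtSum {r : ℕ} :
    Measurable fun x : Fin r → ℝ => Real.sqrt (1 + ∑ j, x j ^ 2) := by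
  exact (Real.continuous_sqrt.comp (by continuity)).measurable

lemma measurable_fermiMap {k r : ℕ} : Measurable (fermiMap (k := k) (r := r)) := by
  unfold fermiMap
  refine Measurable.prodMk ?_ (Measurable.prodMk ?_ ?_)
  · exact (measurable_fst).div (measurable_sqrtSum.comp (measurable_snd.comp measurable_snd))
  · exact measurable_fst.comp measurable_snd
  · refine measurable_pi_lambda _ fun j => ?_
    exact (measurable_fst.mul ((measurable_pi_apply j).comp
      (measurable_snd.comp measurable_snd))).div
      (measurable_sqrtSum.comp (measurable_snd.comp measurable_snd))

/-- One-dimensional scaling substitution on `(0, ∞)`. -/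
lemma lintegral_Ioi_scale (g : ℝ → ℝ≥0∞) (hg : Measurable g) {c : ℝ} (hc : 0 < c) :
    ∫⁻ y in Set.Ioi (0 : ℝ), g y =
      ENNReal.ofReal c * ∫⁻ η in Set.Ioi (0 : ℝ), g (c * η) := by
  have hmap := Real.map_volume_mul_left (a := c) hc.ne'
  have h1 : ∫⁻ y in Set.Ioi (0 : ℝ), g y ∂(Measure.map (c * ·) volume) =
      ∫⁻ η in (c * ·) ⁻¹' Set.Ioi (0 : ℝ), g (c * η) :=
    setLIntegral_map measurableSet_Ioi hg (measurable_const_mul c)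
  have hpre : (c * ·) ⁻¹' Set.Ioi (0 : ℝ) = Set.Ioi (0 : ℝ) := by
    ext y; simp [mul_pos_iff_of_pos_left, hc]
  rw [hpre] at h1
  rw [hmap] at h1
  rw [Measure.restrict_smul, lintegral_smul_measure] at h1
  rw [← h1, smul_eq_mul, ← mul_assoc, ← ENNReal.ofReal_mul hc.le,
    abs_of_pos (inv_pos.2 hc), mul_inv_cancel₀ hc.ne', ENNReal.ofReal_one, one_mul]

/-- Scaling substitution on `ℝ^r`. -/
lemma lintegral_pi_scale {r : ℕ} (g : (Fin r → ℝ) → ℝ≥0∞) (hg : Measurable g)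
    {c : ℝ} (hc : 0 < c) :
    ∫⁻ w, g w = ENNReal.ofReal (c ^ r) * ∫⁻ x, g (c • x) := by
  have hmap := Measure.map_addHaar_smul (volume : Measure (Fin r → ℝ)) hc.ne'
  rw [Module.finrank_fin_fun] at hmap
  have h1 : ∫⁻ x, g (c • x) = ∫⁻ w, g w ∂(Measure.map (c • ·) (volume : Measure (Fin r → ℝ))) :=
    (lintegral_map hg (measurable_const_smul c)).symm
  rw [hmap, lintegral_smul_measure] at h1
  rw [h1, smul_eq_mul, ← mul_assoc, ← ENNReal.ofReal_mul (by positivity),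
    abs_of_pos (by positivity), mul_inv_cancel₀ (by positivity), ENNReal.ofReal_one, one_mul]

/-- The scalar Jacobian identity. -/
lemma fermi_scalar_id (k : ℕ) {η t : ℝ} (hη : 0 < η) (ht : 0 < t) :
    (Real.sqrt t)⁻¹ * ((Real.sqrt t)⁻¹ * η) ^ (-((k : ℝ) + 1)) =
      η ^ (-((k : ℝ) + 1)) * t ^ ((k : ℝ) / 2) := by
  have h1 : (Real.sqrt t)⁻¹ = t ^ (-(1 / 2) : ℝ) := by
    rw [Real.sqrt_eq_rpow, ← Real.rpow_neg ht.le]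
  rw [h1, Real.mul_rpow (Real.rpow_nonneg ht.le _) hη.le, ← Real.rpow_mul ht.le]
  have h2 : t ^ (-(1 / 2) : ℝ) * (t ^ (-(1 / 2 : ℝ) * -((k : ℝ) + 1)) * η ^ (-((k : ℝ) + 1)))
      = t ^ (-(1 / 2 : ℝ) * -((k : ℝ) + 1)) * t ^ (-(1 / 2) : ℝ) * η ^ (-((k : ℝ) + 1)) := by
    ring
  rw [h2, ← Real.rpow_add ht, mul_comm]
  congr 1
  ring

/-- In Fermi normal coordinates `(η, w', x)` around a totally geodesic hyperbolic
`m`-manifold (`m = k+1`) inside a hyperbolic `n`-manifold (`n = m + r`), the hyperbolic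
volume element `y^{-n} dy dw' dw''` becomes `η^{-m} (1+|x|²)^{(m-1)/2} dη dw' dx`. -/
theorem fermi_volume_factorization (k r : ℕ)
    (f : Coords k r → ℝ≥0∞) (hf : Measurable f) :
    ∫⁻ p in {p : Coords k r | 0 < p.1}, f p *
        ENNReal.ofReal (p.1 ^ (-((k : ℝ) + 1 + r))) ∂volume =
      ∫⁻ q in {q : Coords k r | 0 < q.1}, f (fermiMap q) *
        ENNReal.ofReal (q.1 ^ (-((k : ℝ) + 1)) *
          (1 + ∑ j, q.2.2 j ^ 2) ^ ((k : ℝ) / 2)) ∂volume := by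
  classical
  set A := (Fin k → ℝ)
  set B := (Fin r → ℝ)
  -- the set as a product
  have hSet : {p : Coords k r | 0 < p.1} =
      (Set.Ioi (0 : ℝ)) ×ˢ (Set.univ : Set (A × B)) := by
    ext p; simp [Set.mem_prod]
  have hvol : (volume : Measure (Coords k r)) =
      (volume : Measure ℝ).prod (volume : Measure (A × B)) :=
    Measure.volume_eq_prod ℝ (A × B)
  have hrestrict : (volume : Measure (Coords k r)).restrict {p : Coords k r | 0 < p.1} =
      ((volume : Measure ℝ).restrict (Set.Ioi 0)).prod (volume : Measure (A × B)) := by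
    rw [hSet, hvol, ← Measure.prod_restrict, Measure.restrict_univ]
  -- measurability helpers
  have hsm : Measurable fun x : B => Real.sqrt (1 + ∑ j, x j ^ 2) := measurable_sqrtSum
  have hrpow : ∀ c : ℝ, Measurable fun y : ℝ => y ^ c := fun c =>
    measurable_id.pow_const c
  -- the two intermediate integrands
  set G : ℝ → A × B → ℝ≥0∞ := fun y w =>
    f (y, w.1, y • w.2) * ENNReal.ofReal (y ^ (-((k : ℝ) + 1))) with hG
  set H : ℝ → A × B → ℝ≥0∞ := fun η w =>
    f (fermiMap (η, w.1, w.2)) * ENNReal.ofReal (η ^ (-((k : ℝ) + 1)) *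
      (1 + ∑ j, w.2 j ^ 2) ^ ((k : ℝ) / 2)) with hH
  have hGmeas : Measurable (Function.uncurry G) := by
    rw [hG]; unfold Function.uncurry
    apply Measurable.mul
    · apply hf.comp
      refine Measurable.prodMk measurable_fst
        (Measurable.prodMk (measurable_fst.comp measurable_snd) ?_)
      exact measurable_fst.smul (measurable_snd.comp measurable_snd)
    · exact ENNReal.measurable_ofReal.comp (measurable_fst.pow_const _)
  have hsum : Measurable fun p : ℝ × (A × B) => (1 + ∑ j, p.2.2 j ^ 2 : ℝ) :=
    measurable_const.add (Finset.measurable_sum _ fun j _ =>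
      ((measurable_pi_apply j).comp (measurable_snd.comp measurable_snd)).pow_const _)
  have hHmeas : Measurable (Function.uncurry H) := by
    rw [hH]; unfold Function.uncurry
    apply Measurable.mul
    · exact (hf.comp measurable_fermiMap).comp (measurable_fst.prodMk
        ((measurable_fst.comp measurable_snd).prodMk (measurable_snd.comp measurable_snd)))
    · exact ENNReal.measurable_ofReal.comp
        ((measurable_fst.pow_const _).mul (hsum.pow_const _))
  -- Step 1: LHS as iterated integral, then pi-scaling in the fibre.
  have step1 : ∫⁻ p in {p : Coords k r | 0 < p.1}, f p *
        ENNReal.ofReal (p.1 ^ (-((k : ℝ) + 1 + r))) ∂volume =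
      ∫⁻ y in Set.Ioi (0 : ℝ), ∫⁻ w : A × B, G y w := by
    rw [hrestrict]
    have hFmeas : Measurable fun p : Coords k r =>
        f p * ENNReal.ofReal (p.1 ^ (-((k : ℝ) + 1 + r))) :=
      hf.mul (ENNReal.measurable_ofReal.comp ((hrpow _).comp measurable_fst))
    rw [lintegral_prod _ hFmeas.aemeasurable]
    refine setLIntegral_congr_fun measurableSet_Ioi ?_
    intro y hy
    have hy' : (0 : ℝ) < y := hy
    beta_reduce
    -- expand over A × B and rescale the B variable
    have hBvol : (volume : Measure (A × B)) =
        (volume : Measure A).prod (volume : Measure B) := Measure.volume_eq_prod A B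
    have hmeasy : Measurable fun w : A × B =>
        f (y, w) * ENNReal.ofReal (y ^ (-((k : ℝ) + 1 + r))) :=
      (hf.comp (measurable_const.prodMk measurable_id)).mul measurable_const
    have hmeasy' : Measurable fun w : A × B => G y w :=
      hGmeas.comp (measurable_const.prodMk measurable_id)
    rw [hBvol, lintegral_prod _ hmeasy.aemeasurable]
    conv_rhs => rw [lintegral_prod _ hmeasy'.aemeasurable]
    refine lintegral_congr fun a => ?_
    have hb : Measurable fun b : B =>
        f (y, a, b) * ENNReal.ofReal (y ^ (-((k : ℝ) + 1 + r))) :=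
      (hf.comp (measurable_const.prodMk (measurable_const.prodMk measurable_id))).mul
        measurable_const
    rw [lintegral_pi_scale _ hb hy']
    rw [← lintegral_const_mul _ (by
      exact (hf.comp (measurable_const.prodMk (measurable_const.prodMk
        (measurable_const_smul y)))).mul measurable_const)]
    refine lintegral_congr fun x => ?_
    simp only [hG]
    rw [← mul_assoc, mul_comm (ENNReal.ofReal ((y:ℝ) ^ r)) _, mul_assoc,
      ← ENNReal.ofReal_mul (by positivity : (0:ℝ) ≤ y ^ r)]
    congr 2
    rw [← Real.rpow_natCast y r, ← Real.rpow_add hy']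
    congr 1
    ring
  -- Step 2: RHS as iterated integral.
  have step2 : ∫⁻ q in {q : Coords k r | 0 < q.1}, f (fermiMap q) *
        ENNReal.ofReal (q.1 ^ (-((k : ℝ) + 1)) *
          (1 + ∑ j, q.2.2 j ^ 2) ^ ((k : ℝ) / 2)) ∂volume =
      ∫⁻ η in Set.Ioi (0 : ℝ), ∫⁻ w : A × B, H η w := by
    rw [hrestrict]
    have hRint : Measurable fun q : Coords k r => f (fermiMap q) *
        ENNReal.ofReal (q.1 ^ (-((k : ℝ) + 1)) *
          (1 + ∑ j, q.2.2 j ^ 2) ^ ((k : ℝ) / 2)) :=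
      (hf.comp measurable_fermiMap).mul (ENNReal.measurable_ofReal.comp
        ((measurable_fst.pow_const _).mul (hsum.pow_const _)))
    rw [lintegral_prod _ hRint.aemeasurable]
  rw [step1, step2]
  -- Step 3: swap the order of integration on both sides.
  rw [lintegral_lintegral_swap hGmeas.aemeasurable,
    lintegral_lintegral_swap hHmeas.aemeasurable]
  -- Step 4: for each fixed w, do the 1-d substitution y = η / s.
  refine lintegral_congr fun w => ?_
  set t : ℝ := 1 + ∑ j, w.2 j ^ 2 with ht
  have ht0 : (0 : ℝ) < t := by positivity
  set s : ℝ := Real.sqrt t with hs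
  have hs0 : (0 : ℝ) < s := Real.sqrt_pos.2 ht0
  have hgy : Measurable fun y => G y w :=
    hGmeas.comp (measurable_id.prodMk measurable_const)
  rw [lintegral_Ioi_scale _ hgy (inv_pos.2 hs0)]
  rw [← lintegral_const_mul _ (by
    exact hgy.comp (measurable_const_mul _))]
  refine setLIntegral_congr_fun measurableSet_Ioi ?_
  intro η hη
  have hη' : (0 : ℝ) < η := hη
  simp only [hG, hH]
  have harg : ((s⁻¹ * η : ℝ), w.1, (s⁻¹ * η) • w.2) = fermiMap (η, w.1, w.2) := by
    unfold fermiMap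
    refine Prod.ext ?_ (Prod.ext rfl ?_)
    · show s⁻¹ * η = η / s
      rw [inv_mul_eq_div]
    · funext j
      show s⁻¹ * η * w.2 j = η * w.2 j / s
      rw [inv_mul_eq_div, div_mul_eq_mul_div]
  rw [harg, ← mul_assoc, mul_comm (ENNReal.ofReal s⁻¹), mul_assoc,
    ← ENNReal.ofReal_mul (inv_nonneg.2 hs0.le)]
  congr 2
  exact fermi_scalar_id k hη' ht0
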